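/- Let G=(V,E) be a cubic graph with |V|=n and let (H,λ) be the temporal graph obtained from G (and a proper 4-edge-coloring c of G) by the Construction. Let M be a 2-temporal matching of (H,λ). Then G contains an independent set of size at least |M| − 3n/2. -/

import Mathlib

variable {V : Type*}

/-- The underlying (static) graph of a temporal graph given by its time-labeling. -/
def ugraph (lab : Sym2 V → Finset ℕ) : SimpleGraph V where
  Adj x y := x ≠ y ∧ (lab s(x, y)).Nonempty
  symm := by
    constructor
    intro x y h
    exact ⟨h.1.symm, by rw [Sym2.eq_swap]; exact h.2⟩
  loopless := by constructor; intro x h; exact h.1 rfl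

/-- `(e, t)` is a time edge of the temporal graph given by `lab`. -/
def IsTimeEdge (lab : Sym2 V → Finset ℕ) (p : Sym2 V × ℕ) : Prop :=
  ¬ p.1.IsDiag ∧ p.2 ∈ lab p.1

/-- Two time edges are Δ-independent: edges disjoint or labels at least Δ apart. -/
def DIndep (Δ : ℕ) (p q : Sym2 V × ℕ) : Prop :=
  (∀ v, v ∈ p.1 → v ∉ q.1) ∨ Δ ≤ ((p.2 : ℤ) - (q.2 : ℤ)).natAbs

/-- A Δ-temporal matching. -/
def IsTM (lab : Sym2 V → Finset ℕ) (Δ : ℕ) (M : Finset (Sym2 V × ℕ)) : Prop :=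
  (∀ p ∈ M, IsTimeEdge lab p) ∧ ∀ p ∈ M, ∀ q ∈ M, p ≠ q → DIndep Δ p q

/-- μ_Δ: maximum cardinality of a Δ-temporal matching. -/
noncomputable def tmu (lab : Sym2 V → Finset ℕ) (Δ : ℕ) : ℕ :=
  sSup {k | ∃ M : Finset (Sym2 V × ℕ), IsTM lab Δ M ∧ M.card = k}

/-- The temporal graph has lifetime `T`. -/
def HasLifetime (lab : Sym2 V → Finset ℕ) (T : ℕ) : Prop :=
  (∀ e, ∀ t ∈ lab e, 1 ≤ t ∧ t ≤ T) ∧ ∃ e : Sym2 V, ¬ e.IsDiag ∧ T ∈ lab e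

/-- The snapshot at time `t`. -/
def tsnapshot (lab : Sym2 V → Finset ℕ) (t : ℕ) : SimpleGraph V where
  Adj x y := x ≠ y ∧ t ∈ lab s(x, y)
  symm := by
    constructor
    intro x y h
    exact ⟨h.1.symm, by rw [Sym2.eq_swap]; exact h.2⟩
  loopless := by constructor; intro x h; exact h.1 rfl

/-- 𝒢|_S : keep only time edges with label in `S`. -/
def trestrict (lab : Sym2 V → Finset ℕ) (S : Finset ℕ) : Sym2 V → Finset ℕ :=
  fun e => lab e ∩ S

/-- A finite matching of a static graph. -/
def IsMatchingF (G : SimpleGraph V) (R : Finset (Sym2 V)) : Prop :=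
  (∀ e ∈ R, e ∈ G.edgeSet) ∧ ∀ e ∈ R, ∀ e' ∈ R, e ≠ e' → ∀ v, v ∈ e → v ∉ e'

/-- ν(G): maximum cardinality of a matching. -/
noncomputable def matchNum (G : SimpleGraph V) : ℕ :=
  sSup {k | ∃ R : Finset (Sym2 V), IsMatchingF G R ∧ R.card = k}

/-- An independent set of a static graph. -/
def IsIndepF (G : SimpleGraph V) (S : Finset V) : Prop :=
  ∀ u ∈ S, ∀ v ∈ S, ¬ G.Adj u v

/-- α(G): maximum cardinality of an independent set. -/
noncomputable def indepNum (G : SimpleGraph V) : ℕ :=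
  sSup {k | ∃ S : Finset V, IsIndepF G S ∧ S.card = k}

/-- The Δ-temporal line graph: vertices are the time edges, two distinct time edges are
adjacent iff the edges share a vertex and the labels are less than Δ apart. -/
def tline (lab : Sym2 V → Finset ℕ) (Δ : ℕ) :
    SimpleGraph {p : Sym2 V × ℕ // IsTimeEdge lab p} where
  Adj p q := p ≠ q ∧ (∃ v, v ∈ p.1.1 ∧ v ∈ q.1.1) ∧ ((p.1.2 : ℤ) - (q.1.2 : ℤ)).natAbs < Δ
  symm := by
    constructor
    rintro p q ⟨hne, ⟨v, hv1, hv2⟩, hlt⟩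
    exact ⟨hne.symm, ⟨v, hv2, hv1⟩, by omega⟩
  loopless := by constructor; rintro p ⟨hne, -⟩; exact hne rfl

/-- The side `α ∈ {0,1}` (encoded as a `Bool`) of an edge `e`, determined by
`α ≡ c(e) (mod 2)` where `c(e) ∈ {1,2,3,4}` is the color of `e`. -/
def aV {V : Type*} (c : Sym2 V → ℕ) (e : Sym2 V) : Bool := c e % 2 == 1

/-- The time slot of the two edges incident to `w_e`: 1 if `c(e) ∈ {1,2}`, 3 if
`c(e) ∈ {3,4}`. -/
def tE {V : Type*} (c : Sym2 V → ℕ) (e : Sym2 V) : ℕ := if c e ≤ 2 then 1 else 3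

/-- `c` is a proper 4-edge-coloring of `G` with colors in `{1,2,3,4}`. -/
def ProperEC {V : Type*} (G : SimpleGraph V) (c : Sym2 V → ℕ) : Prop :=
  (∀ e ∈ G.edgeSet, 1 ≤ c e ∧ c e ≤ 4) ∧
  ∀ e ∈ G.edgeSet, ∀ e' ∈ G.edgeSet, e ≠ e' → (∃ v, v ∈ e ∧ v ∈ e') → c e ≠ c e'

/-- The time-labeling `lab` (on the vertex set `(V × Bool) ⊕ Sym2 V`, where
`(v, false)` plays the role of `v₀`, `(v, true)` of `v₁`, and `Sum.inr e` of `w_e`)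
is exactly the temporal graph `(H, λ)` of the Construction applied to `G` and `c`:
every edge `{v₀,v₁}` has label set `{2}`; for every edge `e` of `G` and each endpoint
`u ∈ e`, the edge `{w_e, u_α}` has label set `{tE c e}`; and no other pair carries
any label. -/
def IsConstruction {V : Type*} (G : SimpleGraph V) (c : Sym2 V → ℕ)
    (lab : Sym2 ((V × Bool) ⊕ Sym2 V) → Finset ℕ) : Prop :=
  (∀ v : V, lab s(Sum.inl (v, false), Sum.inl (v, true)) = {2}) ∧
  (∀ e ∈ G.edgeSet, ∀ u, u ∈ e →
    lab s(Sum.inr e, Sum.inl (u, aV c e)) = {tE c e}) ∧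
  (∀ f : Sym2 ((V × Bool) ⊕ Sym2 V), (lab f).Nonempty →
    (∃ v : V, f = s(Sum.inl (v, false), Sum.inl (v, true))) ∨
    (∃ e ∈ G.edgeSet, ∃ u, u ∈ e ∧ f = s(Sum.inr e, Sum.inl (u, aV c e))))

/-- For a cubic graph `G` on `n` vertices with a proper 4-edge-coloring `c`
and the temporal graph `(H,λ)` of the Construction, from any 2-temporal matching `M` of
`(H,λ)` one obtains an independent set `S` of `G` of size at least `|M| - 3n/2`
(stated multiplied by 2 to avoid division: `2|M| ≤ 2|S| + 3n`). -/
theorem stmt5 {V : Type*} [Fintype V] [DecidableEq V]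
    (G : SimpleGraph V) [DecidableRel G.Adj] (hcubic : ∀ v : V, G.degree v = 3)
    (c : Sym2 V → ℕ) (hc : ProperEC G c)
    (lab : Sym2 ((V × Bool) ⊕ Sym2 V) → Finset ℕ) (hcons : IsConstruction G c lab)
    (M : Finset (Sym2 ((V × Bool) ⊕ Sym2 V) × ℕ)) (hM : IsTM lab 2 M) :
    ∃ S : Finset V, IsIndepF G S ∧ 2 * M.card ≤ 2 * S.card + 3 * Fintype.card V := by
  classical
  obtain ⟨hTE, hDI⟩ := hM
  obtain ⟨hlabA, hlabB, hcase⟩ := hcons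
  have tE13 : ∀ e : Sym2 V, tE c e = 1 ∨ tE c e = 3 := by
    intro e; unfold tE; split <;> simp
  -- the set A of vertices whose A-edge is in M
  set A : Finset V := Finset.univ.filter
    (fun v => (s(Sum.inl (v, false), Sum.inl (v, true)), (2 : ℕ)) ∈ M) with hAdef
  -- pairs (e,u) realizing B-type time edges of M
  set P : Finset (Sym2 V × V) := (G.edgeFinset ×ˢ Finset.univ).filter
    (fun q => q.2 ∈ q.1 ∧
      (s(Sum.inr q.1, Sum.inl (q.2, aV c q.1)), tE c q.1) ∈ M) with hPdef
  -- key conflict : a B-edge at u forbids the A-edge at u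
  have conflict : ∀ q ∈ P, q.2 ∉ A := by
    intro q hq hqA
    rw [hPdef, Finset.mem_filter] at hq
    obtain ⟨-, hu, hpM⟩ := hq
    rw [hAdef, Finset.mem_filter] at hqA
    have hqM := hqA.2
    have hne : (s(Sum.inr q.1, Sum.inl (q.2, aV c q.1)), tE c q.1) ≠
        (s(Sum.inl (q.2, false), Sum.inl (q.2, true)), (2 : ℕ)) := by
      intro h
      have := congrArg Prod.snd h
      simp only at this
      rcases tE13 q.1 with h1 | h1 <;> omega
    have hdi := hDI _ hpM _ hqM hne
    rcases hdi with hdisj | habs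
    · exact hdisj (Sum.inl (q.2, aV c q.1))
        (by rw [Sym2.mem_iff]; right; rfl)
        (by rw [Sym2.mem_iff]; cases aV c q.1 <;> simp)
    · rcases tE13 q.1 with h1 | h1 <;> simp only [h1] at habs <;> omega
  -- at most one B-edge per G-edge
  have Pinj : Set.InjOn Prod.fst (P : Set (Sym2 V × V)) := by
    intro q hq q' hq' hfst
    simp only [Finset.coe_filter, Set.mem_setOf_eq, hPdef, Finset.mem_coe,
      Finset.mem_product] at hq hq'
    obtain ⟨-, -, hpM⟩ := hq
    obtain ⟨-, -, hpM'⟩ := hq'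
    by_contra hne
    have hne' : (s(Sum.inr q.1, Sum.inl (q.2, aV c q.1)), tE c q.1) ≠
        (s(Sum.inr q'.1, Sum.inl (q'.2, aV c q'.1)), tE c q'.1) := by
      intro h
      apply hne
      have h1 := congrArg Prod.fst h
      simp only [hfst] at h1
      rw [Sym2.eq_iff] at h1
      rcases h1 with ⟨-, h2⟩ | ⟨h2, -⟩
      · have : q.2 = q'.2 := by
          injection Sum.inl.inj h2
        exact Prod.ext hfst this
      · exact absurd h2 (by simp)
    have hdi := hDI _ hpM _ hpM' hne'
    rcases hdi with hdisj | habs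
    · exact hdisj (Sum.inr q.1) (by rw [Sym2.mem_iff]; left; rfl)
        (by rw [Sym2.mem_iff]; left; rw [hfst])
    · rw [hfst] at habs; omega
  -- the edges carrying a B-time-edge
  set F1 : Finset (Sym2 V) := P.image Prod.fst with hF1def
  have hF1card : F1.card = P.card := Finset.card_image_of_injOn Pinj
  -- the edges with both endpoints in A
  set F2 : Finset (Sym2 V) := G.edgeFinset.filter (fun e => ∀ w ∈ e, w ∈ A)
    with hF2def
  have hdisjF : Disjoint F1 F2 := by
    rw [Finset.disjoint_left]
    intro e he1 he2
    rw [hF1def, Finset.mem_image] at he1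
    obtain ⟨q, hq, rfl⟩ := he1
    rw [hF2def, Finset.mem_filter] at he2
    have hu : q.2 ∈ q.1 := by
      rw [hPdef, Finset.mem_filter] at hq; exact hq.2.1
    exact conflict q hq (he2.2 q.2 hu)
  have hF12 : F1.card + F2.card ≤ G.edgeFinset.card := by
    rw [← Finset.card_union_of_disjoint hdisjF]
    apply Finset.card_le_card
    intro e he
    rcases Finset.mem_union.1 he with h | h
    · rw [hF1def, Finset.mem_image] at h
      obtain ⟨q, hq, rfl⟩ := h
      rw [hPdef, Finset.mem_filter, Finset.mem_product] at hq
      exact hq.1.1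
    · rw [hF2def, Finset.mem_filter] at h; exact h.1
  -- the transversal and the independent set
  set T : Finset V := F2.image (fun e => e.out.1) with hTdef
  have hTA : T ⊆ A := by
    intro x hx
    rw [hTdef, Finset.mem_image] at hx
    obtain ⟨e, he, rfl⟩ := hx
    rw [hF2def, Finset.mem_filter] at he
    exact he.2 _ (Sym2.out_fst_mem e)
  set S : Finset V := A \ T with hSdef
  have hScard : A.card ≤ S.card + F2.card := by
    have h1 : S.card = A.card - T.card := Finset.card_sdiff_of_subset hTA
    have h2 : T.card ≤ F2.card := Finset.card_image_le
    have h3 : T.card ≤ A.card := Finset.card_le_card hTA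
    omega
  have hSindep : IsIndepF G S := by
    intro u hu v hv hadj
    have heF2 : s(u, v) ∈ F2 := by
      rw [hF2def, Finset.mem_filter]
      refine ⟨SimpleGraph.mem_edgeFinset.2 hadj, ?_⟩
      intro w hw
      rw [Sym2.mem_iff] at hw
      rw [hSdef, Finset.mem_sdiff] at hu hv
      rcases hw with rfl | rfl
      · exact hu.1
      · exact hv.1
    have hout : (s(u, v)).out.1 ∈ T := by
      rw [hTdef, Finset.mem_image]; exact ⟨_, heF2, rfl⟩
    have hmem : (s(u, v)).out.1 ∈ s(u, v) := Sym2.out_fst_mem _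
    rw [Sym2.mem_iff] at hmem
    rw [hSdef, Finset.mem_sdiff] at hu hv
    rcases hmem with h | h
    · exact hu.2 (h ▸ hout)
    · exact hv.2 (h ▸ hout)
  -- split M into A-type and B-type
  set MA : Finset (Sym2 ((V × Bool) ⊕ Sym2 V) × ℕ) := M.filter
    (fun p => ∃ v : V, p = (s(Sum.inl (v, false), Sum.inl (v, true)), (2 : ℕ)))
    with hMAdef
  have hsplit := Finset.card_filter_add_card_filter_not
    (s := M) (p := fun p => ∃ v : V,
      p = (s(Sum.inl (v, false), Sum.inl (v, true)), (2 : ℕ)))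
  rw [← hMAdef] at hsplit
  have hMAcard : MA.card ≤ A.card := by
    have hsub : MA ⊆ A.image
        (fun v => (s(Sum.inl (v, false), Sum.inl (v, true)), (2 : ℕ))) := by
      intro p hp
      rw [hMAdef, Finset.mem_filter] at hp
      obtain ⟨hpM, v, rfl⟩ := hp
      rw [Finset.mem_image]
      exact ⟨v, by rw [hAdef, Finset.mem_filter]; exact ⟨Finset.mem_univ v, hpM⟩, rfl⟩
    calc MA.card ≤ _ := Finset.card_le_card hsub
      _ ≤ A.card := Finset.card_image_le
  have hMBcard : (M.filter (fun p => ¬ ∃ v : V,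
      p = (s(Sum.inl (v, false), Sum.inl (v, true)), (2 : ℕ)))).card ≤ P.card := by
    have hsub : M.filter (fun p => ¬ ∃ v : V,
        p = (s(Sum.inl (v, false), Sum.inl (v, true)), (2 : ℕ))) ⊆ P.image
        (fun q => (s(Sum.inr q.1, Sum.inl (q.2, aV c q.1)), tE c q.1)) := by
      intro p hp
      rw [Finset.mem_filter] at hp
      obtain ⟨hpM, hnA⟩ := hp
      have hte := hTE p hpM
      have hne : (lab p.1).Nonempty := ⟨p.2, hte.2⟩
      rcases hcase p.1 hne with ⟨v, hv⟩ | ⟨e, heG, u, hue, hfe⟩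
      · exfalso
        apply hnA
        refine ⟨v, ?_⟩
        have h2 : p.2 ∈ lab p.1 := hte.2
        rw [hv, hlabA v, Finset.mem_singleton] at h2
        exact Prod.ext hv h2
      · have h2 : p.2 ∈ lab p.1 := hte.2
        rw [hfe, hlabB e heG u hue, Finset.mem_singleton] at h2
        rw [Finset.mem_image]
        refine ⟨(e, u), ?_, ?_⟩
        · rw [hPdef, Finset.mem_filter, Finset.mem_product]
          refine ⟨⟨SimpleGraph.mem_edgeFinset.2 heG, Finset.mem_univ u⟩, hue, ?_⟩
          have : p = (s(Sum.inr e, Sum.inl (u, aV c e)), tE c e) :=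
            Prod.ext hfe h2
          rwa [this] at hpM
        · exact (Prod.ext hfe h2).symm
    calc _ ≤ _ := Finset.card_le_card hsub
      _ ≤ P.card := Finset.card_image_le
  -- handshake
  have hhand : 3 * Fintype.card V = 2 * G.edgeFinset.card := by
    have h := G.sum_degrees_eq_twice_card_edges
    simp only [hcubic, Finset.sum_const, smul_eq_mul, Finset.card_univ] at h
    omega
  refine ⟨S, hSindep, ?_⟩
  omega
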